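/- Let X be a completely metrizable topological space and let E be a nonempty subset of X. Then E is an H₁-retract of X if and only if E is a Gδ-set in X. -/

import Mathlib

/-- A set is an Fσ-set if it is a countable union of closed sets. -/
def IsFsigma {X : Type*} [TopologicalSpace X] (A : Set X) : Prop :=
  ∃ F : ℕ → Set X, (∀ n, IsClosed (F n)) ∧ A = ⋃ n, F n

/-- A mapping is of the first Lebesgue class if the preimage of every open set is Fσ. -/
def LebesgueClassOne {X Y : Type*} [TopologicalSpace X] [TopologicalSpace Y] (g : X → Y) : Prop :=
  ∀ V : Set Y, IsOpen V → IsFsigma (g ⁻¹' V)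

/-- `E` is an H₁-retract of `X` if there is a first Lebesgue class map `r : X → E`
fixing the points of `E`. -/
def IsH1Retract {X : Type*} [TopologicalSpace X] (E : Set X) : Prop :=
  ∃ r : X → E, (∀ x : E, r x = x) ∧ LebesgueClassOne r
/-- A topological space is completely metrizable if its topology is induced by some
complete metric. -/
def CompletelyMetrizable (X : Type*) [t : TopologicalSpace X] : Prop :=
  ∃ m : MetricSpace X, m.toUniformSpace.toTopologicalSpace = t ∧ @CompleteSpace X m.toUniformSpace


set_option maxHeartbeats 2000000

open Set

namespace H1R

section Aux

open Metric EMetric ENNReal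

variable {X : Type*} [MetricSpace X]

lemma isFsigma_iUnion_nat {A : ℕ → Set X} (h : ∀ n, IsFsigma (A n)) :
    IsFsigma (⋃ n, A n) := by
  choose F hFcl hFeq using h
  refine ⟨fun k => F (Nat.unpair k).1 (Nat.unpair k).2, fun k => hFcl _ _, ?_⟩
  ext x
  simp only [mem_iUnion]
  constructor
  · rintro ⟨n, hx⟩
    rw [hFeq n] at hx
    rcases mem_iUnion.1 hx with ⟨m, hm⟩
    exact ⟨Nat.pair n m, by simpa [Nat.unpair_pair] using hm⟩
  · rintro ⟨k, hk⟩
    exact ⟨(Nat.unpair k).1, by rw [hFeq]; exact mem_iUnion.2 ⟨_, hk⟩⟩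

lemma isFsigma_of_isClosed {C : Set X} (h : IsClosed C) : IsFsigma C :=
  ⟨fun _ => C, fun _ => h, (iUnion_const C).symm⟩

lemma isFsigma_empty : IsFsigma (∅ : Set X) := isFsigma_of_isClosed isClosed_empty

lemma isFsigma_union {A B : Set X} (hA : IsFsigma A) (hB : IsFsigma B) : IsFsigma (A ∪ B) := by
  have : A ∪ B = ⋃ n : ℕ, (if n = 0 then A else B) := by
    ext x; simp only [mem_union, mem_iUnion]
    constructor
    · rintro (h | h); exacts [⟨0, by simpa⟩, ⟨1, by simpa⟩]
    · rintro ⟨n, hn⟩; by_cases h : n = 0 <;> simp [h] at hn <;> [left; right] <;> exact hn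
  rw [this]
  exact isFsigma_iUnion_nat (fun n => by by_cases h : n = 0 <;> simp [h] <;> [exact hA; exact hB])

/-- The `m`-deep part of a set: points at e-distance at least `1/(m+1)` from the complement. -/
def deep (O : Set X) (m : ℕ) : Set X := {z | ((m : ℝ≥0∞) + 1)⁻¹ ≤ infEdist z Oᶜ}

lemma isClosed_deep (O : Set X) (m : ℕ) : IsClosed (deep O m) :=
  isClosed_le continuous_const continuous_infEdist

lemma one_div_succ_ne_zero (m : ℕ) : ((m : ℝ≥0∞) + 1)⁻¹ ≠ 0 :=
  ENNReal.inv_ne_zero.2 (by simp)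

lemma deep_subset (O : Set X) (m : ℕ) : deep O m ⊆ O := by
  intro z hz
  by_contra hzo
  have h0 : infEdist z Oᶜ = 0 := infEdist_zero_of_mem hzo
  have hz' : ((m : ℝ≥0∞) + 1)⁻¹ ≤ infEdist z Oᶜ := hz
  rw [h0, le_zero_iff] at hz'
  exact one_div_succ_ne_zero m hz'

lemma mem_deep_of_mem_open {O : Set X} (hO : IsOpen O) {z : X} (hz : z ∈ O) :
    ∃ m, z ∈ deep O m := by
  have h1 : z ∉ closure Oᶜ := by
    rw [hO.isClosed_compl.closure_eq]; simpa using hz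
  have h2 : 0 < infEdist z Oᶜ := infEdist_pos_iff_notMem_closure.2 h1
  rcases ENNReal.exists_inv_nat_lt h2.ne' with ⟨n, hn⟩
  refine ⟨n, le_trans ?_ hn.le⟩
  exact ENNReal.inv_le_inv.2 (by exact_mod_cast Nat.le_succ n)

/-- Key combinatorial lemma: a (possibly uncountable) union of sets of the form
`Cᵢ ∩ Oᵢ` (closed ∩ open) is Fσ, provided the pieces are pairwise "separated". -/
lemma isFsigma_iUnion_closed_inter_open {ι : Type*} (C O : ι → Set X)
    (hC : ∀ i, IsClosed (C i)) (hO : ∀ i, IsOpen (O i))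
    (hsep : ∀ i j, Disjoint (C i ∩ O i) (O j) ∨ Disjoint (C j ∩ O j) (O i) ∨ i = j) :
    IsFsigma (⋃ i, C i ∩ O i) := by
  set D : ι → ℕ → Set X := fun i m => C i ∩ deep (O i) m with hD
  have hDsub : ∀ i m, D i m ⊆ C i ∩ O i := fun i m =>
    inter_subset_inter_right _ (deep_subset _ _)
  have hDcl : ∀ i m, IsClosed (D i m) := fun i m => (hC i).inter (isClosed_deep _ _)
  have hcover : ∀ i, C i ∩ O i = ⋃ m, D i m := by
    intro i; ext z; constructor
    · rintro ⟨hzc, hzo⟩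
      rcases mem_deep_of_mem_open (hO i) hzo with ⟨m, hm⟩
      exact mem_iUnion.2 ⟨m, hzc, hm⟩
    · intro hz
      rcases mem_iUnion.1 hz with ⟨m, hm⟩
      exact hDsub i m hm
  have hclosed : ∀ m, IsClosed (⋃ i, D i m) := by
    intro m
    apply isClosed_of_closure_subset
    intro z hz
    set c : ℝ≥0∞ := ((m : ℝ≥0∞) + 1)⁻¹ with hc
    have hc0 : c ≠ 0 := one_div_succ_ne_zero m
    have hc2 : 0 < c / 2 := ENNReal.half_pos hc0
    obtain ⟨y₀, hy₀, hy₀d⟩ := EMetric.mem_closure_iff.1 hz (c / 2) hc2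
    obtain ⟨i₀, hi₀⟩ := mem_iUnion.1 hy₀
    suffices hmem : z ∈ closure (D i₀ m) by
      rw [(hDcl i₀ m).closure_eq] at hmem
      exact mem_iUnion.2 ⟨i₀, hmem⟩
    rw [EMetric.mem_closure_iff]
    intro ε hε
    obtain ⟨y, hy, hyd⟩ := EMetric.mem_closure_iff.1 hz (min ε (c / 2)) (lt_min hε hc2)
    obtain ⟨j, hj⟩ := mem_iUnion.1 hy
    have hyd1 : edist z y < ε := hyd.trans_le (min_le_left _ _)
    have hyd2 : edist z y < c / 2 := hyd.trans_le (min_le_right _ _)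
    rcases hsep i₀ j with hd | hd | he
    · exfalso
      -- y₀ ∉ O j, y is deep in O j
      have hy₀nj : y₀ ∈ (O j)ᶜ := fun hmem => Set.disjoint_left.1 hd (hDsub i₀ m hi₀) hmem
      have h1 : c ≤ infEdist y (O j)ᶜ := hj.2
      have h2 : infEdist y (O j)ᶜ ≤ edist y y₀ := infEdist_le_edist_of_mem hy₀nj
      have h3 : edist y y₀ ≤ edist y z + edist z y₀ := edist_triangle _ _ _
      have h4 : edist y z + edist z y₀ < c / 2 + c / 2 :=
        ENNReal.add_lt_add (by rwa [edist_comm]) hy₀d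
      rw [ENNReal.add_halves] at h4
      exact absurd ((h1.trans h2).trans h3) (not_le.2 h4)
    · exfalso
      have hynj : y ∈ (O i₀)ᶜ := fun hmem => Set.disjoint_left.1 hd (hDsub j m hj) hmem
      have h1 : c ≤ infEdist y₀ (O i₀)ᶜ := hi₀.2
      have h2 : infEdist y₀ (O i₀)ᶜ ≤ edist y₀ y := infEdist_le_edist_of_mem hynj
      have h3 : edist y₀ y ≤ edist y₀ z + edist z y := edist_triangle _ _ _
      have h4 : edist y₀ z + edist z y < c / 2 + c / 2 :=
        ENNReal.add_lt_add (by rwa [edist_comm]) hyd2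
      rw [ENNReal.add_halves] at h4
      exact absurd ((h1.trans h2).trans h3) (not_le.2 h4)
    · subst he
      exact ⟨y, hj, hyd1⟩
  refine ⟨fun m => ⋃ i, D i m, hclosed, ?_⟩
  ext z
  simp only [mem_iUnion]
  constructor
  · rintro ⟨i, hi⟩
    rw [hcover i] at hi
    rcases mem_iUnion.1 hi with ⟨m, hm⟩
    exact ⟨m, i, hm⟩
  · rintro ⟨m, i, hm⟩
    exact ⟨i, hDsub i m hm⟩

/-- An open set in a metric space is Fσ. -/
lemma isFsigma_of_isOpen {O : Set X} (hO : IsOpen O) : IsFsigma O := by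
  have h := isFsigma_iUnion_closed_inter_open (ι := Unit) (fun _ => univ) (fun _ => O)
    (fun _ => isClosed_univ) (fun _ => hO) (fun i j => Or.inr (Or.inr (by cases i; cases j; rfl)))
  simpa only [univ_inter, iUnion_const] using h

/-- Baire-type avoidance lemma: in a complete metric space, given a closed set `ℂ`,
countably many closed sets each of which is nowhere dense relative to `ℂ`, and an open
set meeting `ℂ`, there is a point of the intersection avoiding all the closed sets. -/
lemma baire_avoid [CompleteSpace X] {T : Set X} (hcl : IsClosed T) (N : ℕ → Set X)
    (hNcl : ∀ k, IsClosed (N k))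
    (hnwd : ∀ k O, IsOpen O → (O ∩ T).Nonempty → ¬(O ∩ T ⊆ N k))
    {O₀ : Set X} (hO₀ : IsOpen O₀) (hO₀ne : (O₀ ∩ T).Nonempty) :
    ∃ z, z ∈ O₀ ∩ T ∧ ∀ k, z ∉ N k := by
  haveI : CompleteSpace T := hcl.completeSpace_coe
  set g : ℕ → Set T := fun k => (fun z : T => (z : X)) ⁻¹' (N k)ᶜ with hg
  have hgo : ∀ k, IsOpen (g k) := fun k =>
    (hNcl k).isOpen_compl.preimage continuous_subtype_val
  have hgd : ∀ k, Dense (g k) := by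
    intro k
    rw [dense_iff_inter_open]
    rintro U hU ⟨u, hu⟩
    rcases isOpen_induced_iff.1 hU with ⟨O, hOopen, rfl⟩
    have hOne : (O ∩ T).Nonempty := ⟨(u : X), hu, u.2⟩
    have := hnwd k O hOopen hOne
    rcases not_subset.1 this with ⟨z, hz, hzN⟩
    exact ⟨⟨z, hz.2⟩, hz.1, hzN⟩
  have hdense : Dense (⋂ k, g k) := dense_iInter_of_isOpen_nat hgo hgd
  have hU0 : IsOpen ((fun z : T => (z : X)) ⁻¹' O₀) := hO₀.preimage continuous_subtype_val
  have hU0ne : ((fun z : T => (z : X)) ⁻¹' O₀).Nonempty := by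
    rcases hO₀ne with ⟨z, hz⟩
    exact ⟨⟨z, hz.2⟩, hz.1⟩
  rcases hdense.inter_open_nonempty _ hU0 hU0ne with ⟨z, hz1, hz2⟩
  refine ⟨(z : X), ⟨hz1, z.2⟩, fun k hk => ?_⟩
  have := mem_iInter.1 hz2 k
  exact this hk


end Aux

section Chain

universe u

/-- Transfinite iteration of a "derivative" operation on sets. -/
noncomputable def derivChain {X : Type u} (g : Set X → Set X) : Ordinal.{u} → Set X :=
  fun α => ⋂ β : {β : Ordinal.{u} // β < α}, g (derivChain g β.1)
termination_by α => α
decreasing_by exact β.2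

lemma derivChain_def {X : Type u} (g : Set X → Set X) (α : Ordinal.{u}) :
    derivChain g α = ⋂ β : {β : Ordinal.{u} // β < α}, g (derivChain g β.1) := by
  rw [derivChain]

lemma mem_derivChain_iff {X : Type u} (g : Set X → Set X) (α : Ordinal.{u}) (z : X) :
    z ∈ derivChain g α ↔ ∀ β < α, z ∈ g (derivChain g β) := by
  rw [derivChain_def]
  constructor
  · intro h β hβ
    exact mem_iInter.1 h ⟨β, hβ⟩
  · intro h
    exact mem_iInter.2 fun β => h β.1 β.2

lemma derivChain_zero {X : Type u} (g : Set X → Set X) : derivChain g 0 = univ := by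
  ext z
  simp [mem_derivChain_iff]

lemma derivChain_anti {X : Type u} (g : Set X → Set X) {β α : Ordinal.{u}} (h : β ≤ α) :
    derivChain g α ⊆ derivChain g β := by
  intro z hz
  rw [mem_derivChain_iff] at hz ⊢
  exact fun γ hγ => hz γ (lt_of_lt_of_le hγ h)

lemma derivChain_succ {X : Type u} (g : Set X → Set X) (hmono : Monotone g)
    (α : Ordinal.{u}) : derivChain g (α + 1) = g (derivChain g α) := by
  apply subset_antisymm
  · intro z hz
    have hlt : α < α + 1 := by rw [Ordinal.add_one_eq_succ]; exact Order.lt_succ α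
    exact (mem_derivChain_iff g _ z).1 hz α hlt
  · intro z hz
    rw [mem_derivChain_iff]
    intro β hβ
    have hβα : β ≤ α := by
      rw [Ordinal.add_one_eq_succ, Order.lt_succ_iff] at hβ
      exact hβ
    exact hmono (derivChain_anti g hβα) hz

lemma derivChain_isClosed {X : Type u} [TopologicalSpace X] (g : Set X → Set X)
    (hg : ∀ s, IsClosed s → IsClosed (g s)) (α : Ordinal.{u}) :
    IsClosed (derivChain g α) := by
  induction α using Ordinal.induction with
  | _ α ih =>
    rw [derivChain_def]
    exact isClosed_iInter fun β => hg _ (ih β.1 β.2)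

lemma derivChain_fix {X : Type u} (g : Set X → Set X) (hmono : Monotone g)
    (hdefl : ∀ s, g s ⊆ s) : ∃ α : Ordinal.{u}, derivChain g (α + 1) = derivChain g α := by
  by_contra hcon
  push_neg at hcon
  have hssub : ∀ α : Ordinal.{u}, derivChain g (α + 1) ⊂ derivChain g α := by
    intro α
    refine ssubset_of_subset_of_ne ?_ (hcon α)
    rw [derivChain_succ g hmono]
    exact hdefl _
  have hinj : Function.Injective (derivChain g) := by
    have key : ∀ α β : Ordinal.{u}, α < β → derivChain g α = derivChain g β → False := by
      intro α β h hEq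
      have h1 : derivChain g β ⊆ derivChain g (α + 1) := by
        apply derivChain_anti
        rw [Ordinal.add_one_eq_succ, Order.succ_le_iff]
        exact h
      have h2 : derivChain g (α + 1) ⊂ derivChain g β := hEq ▸ hssub α
      exact absurd (lt_of_lt_of_le h2 h1) (lt_irrefl _)
    intro α β hEq
    by_contra hne
    rcases lt_or_gt_of_ne hne with h | h
    · exact key α β h hEq
    · exact key β α h hEq.symm
  have : Small.{u} Ordinal.{u} := small_of_injective hinj
  exact not_small_ordinal this


end Chain

section Main

open Metric

/-- Stone-type lemma: every metric space admits a σ-disjoint decomposition into open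
sets of diameter less than `2δ`, indexed by pairs (level, center). -/
lemma stone {Y : Type*} [MetricSpace Y] {δ : ℝ} (hδ : 0 < δ) :
    ∃ V : ℕ → Y → Set Y, (∀ n γ, IsOpen (V n γ)) ∧
      (∀ n γ y, y ∈ V n γ → dist y γ < δ) ∧
      (∀ n γ γ', γ ≠ γ' → ∀ z, z ∈ V n γ → z ∈ V n γ' → False) ∧
      (∀ x : Y, ∃ n γ, x ∈ V n γ) := by
  classical
  have wf : WellFounded (WellOrderingRel : Y → Y → Prop) :=
    (WellOrderingRel.isWellOrder).toIsWellFounded.wf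
  have hcand : ∀ x : Y, ({γ : Y | dist x γ < δ}).Nonempty := fun x => ⟨x, by simp [hδ]⟩
  set lc : Y → Y := fun x => wf.min {γ : Y | dist x γ < δ} (hcand x) with hlc
  have hlcmem : ∀ x, dist x (lc x) < δ := fun x => wf.min_mem {γ : Y | dist x γ < δ} (hcand x)
  have hlcmin : ∀ x γ, WellOrderingRel γ (lc x) → ¬ dist x γ < δ :=
    fun x γ h hd => wf.not_lt_min {γ : Y | dist x γ < δ} hd h
  set rad : ℕ → ℝ := fun n => (1/2)^n * (δ/8) with hrad
  have hradpos : ∀ n, 0 < rad n := fun n => by positivity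
  -- generator sets and levels
  set gen : ℕ → Set Y → Y → Set Y := fun n S γ =>
    {x : Y | lc x = γ ∧ dist x γ < δ - 3 * rad n ∧ x ∉ S} with hgen
  set lvl : ℕ → Set Y → Y → Set Y := fun n S γ =>
    ⋃ x ∈ gen n S γ, ball x (rad n) with hlvl
  set U : ℕ → Set Y := fun n => Nat.rec ∅ (fun k S => S ∪ ⋃ γ, lvl k S γ) n with hU
  have hUsucc : ∀ n, U (n+1) = U n ∪ ⋃ γ, lvl n (U n) γ := fun n => rfl
  set V : ℕ → Y → Set Y := fun n γ => lvl n (U n) γ with hV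
  have hVopen : ∀ n γ, IsOpen (V n γ) := fun n γ =>
    isOpen_biUnion fun x _ => isOpen_ball
  have hVdiam : ∀ n γ y, y ∈ V n γ → dist y γ < δ := by
    intro n γ y hy
    obtain ⟨x, hx, hb⟩ := mem_iUnion₂.1 hy
    have h1 : dist y x < rad n := mem_ball.1 hb
    have h2 : dist x γ < δ - 3 * rad n := hx.2.1
    have h3 : dist y γ ≤ dist y x + dist x γ := dist_triangle _ _ _
    have := hradpos n
    linarith
  have hVdisj : ∀ n γ γ', γ ≠ γ' → ∀ z, z ∈ V n γ → z ∈ V n γ' → False := by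
    have key : ∀ n γ γ', WellOrderingRel γ γ' → ∀ z, z ∈ V n γ → z ∈ V n γ' → False := by
      intro n γ γ' hlt z hz hz'
      obtain ⟨x, hx, hb⟩ := mem_iUnion₂.1 hz
      obtain ⟨x', hx', hb'⟩ := mem_iUnion₂.1 hz'
      -- lc x' = γ' and γ ≺ γ', so dist x' γ ≥ δ
      have h1 : ¬ dist x' γ < δ := by
        apply hlcmin x' γ
        rw [hx'.1]
        exact hlt
      have h2 : dist x γ < δ - 3 * rad n := hx.2.1
      have h3 : dist x' γ ≤ dist x' x + dist x γ := dist_triangle _ _ _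
      have h4 : dist x' x ≤ dist x' z + dist z x := dist_triangle _ _ _
      have h5 : dist z x < rad n := mem_ball.1 hb
      have h6 : dist z x' < rad n := mem_ball.1 hb'
      have h7 : dist x' z = dist z x' := dist_comm _ _
      have := hradpos n
      push_neg at h1
      linarith
    intro n γ γ' hne z hz hz'
    rcases trichotomous (r := (WellOrderingRel : Y → Y → Prop)) γ γ' with h | h | h
    · exact key n γ γ' h z hz hz'
    · exact hne h
    · exact key n γ' γ h z hz' hz
  have hVcover : ∀ x : Y, ∃ n γ, x ∈ V n γ := by
    intro x
    by_cases hxU : ∃ n, x ∈ U n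
    · -- take the least level containing x
      obtain ⟨n, hn⟩ := hxU
      -- use strong induction: U n ⊆ union of all V m γ for m < n
      have hsub : ∀ n, U n ⊆ ⋃ m, ⋃ γ, V m γ := by
        intro n
        induction n with
        | zero => intro z hz; exact absurd hz (notMem_empty z)
        | succ k ih =>
          rw [hUsucc]
          rintro z (hz | hz)
          · exact ih hz
          · obtain ⟨γ, hγ⟩ := mem_iUnion.1 hz
            exact mem_iUnion.2 ⟨k, mem_iUnion.2 ⟨γ, hγ⟩⟩
      obtain ⟨m, hm⟩ := mem_iUnion.1 (hsub n hn)
      obtain ⟨γ, hγ⟩ := mem_iUnion.1 hm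
      exact ⟨m, γ, hγ⟩
    · push_neg at hxU
      set γ := lc x with hγ
      have hd : dist x γ < δ := hlcmem x
      obtain ⟨n, hn⟩ : ∃ n : ℕ, 3 * rad n < δ - dist x γ := by
        have h2 : 0 < δ - dist x γ := by linarith
        obtain ⟨n, hn⟩ := exists_pow_lt_of_lt_one (show (0:ℝ) < (δ - dist x γ) / (3 * (δ/8)) by positivity)
          (show (1:ℝ)/2 < 1 by norm_num)
        refine ⟨n, ?_⟩
        have h3 : (0:ℝ) < 3 * (δ/8) := by positivity
        calc 3 * rad n = (1/2)^n * (3 * (δ/8)) := by rw [hrad]; ring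
          _ < ((δ - dist x γ) / (3 * (δ/8))) * (3 * (δ/8)) := by
              apply mul_lt_mul_of_pos_right hn h3
          _ = δ - dist x γ := by field_simp
      refine ⟨n, γ, ?_⟩
      have hgenx : x ∈ gen n (U n) γ := ⟨rfl, by linarith, hxU n⟩
      exact mem_iUnion₂.2 ⟨x, hgenx, mem_ball.2 (by simpa using hradpos n)⟩
  exact ⟨V, hVopen, hVdiam, hVdisj, hVcover⟩


variable {X : Type*} [MetricSpace X]

/-- The key Baire-category contradiction: a nonempty closed subset of a complete metric
space cannot be covered by a disjoint family of sets, all of whose subfamily unions are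
countable unions of closed sets, with each member meager relative to the subset. -/
lemma crux [CompleteSpace X] {ι : Type*} (A : ι → Set X) (C : Set X)
    (hcl : IsClosed C) (hCne : C.Nonempty)
    (hcover : ∀ z ∈ C, ∃ i, z ∈ A i)
    (hdisj : ∀ i j z, z ∈ A i → z ∈ A j → i = j)
    (hFsJ : ∀ J : Set ι, ∃ Cs : ℕ → Set X, (∀ k, IsClosed (Cs k)) ∧ (⋃ i ∈ J, A i) = ⋃ k, Cs k)
    (N : ι → ℕ → Set X) (hNcl : ∀ i k, IsClosed (N i k)) (hNsub : ∀ i, A i ∩ C ⊆ ⋃ k, N i k)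
    (hNnwd : ∀ i k O, IsOpen O → (O ∩ C).Nonempty → ¬(O ∩ C ⊆ N i k)) : False := by
  classical
  obtain ⟨z₀, hz₀⟩ := hCne
  set idx : X → ι := fun z => if h : ∃ i, z ∈ A i then h.choose else (hcover z₀ hz₀).choose
    with hidxdef
  have hidx : ∀ z ∈ C, z ∈ A (idx z) := by
    intro z hz
    have h : ∃ i, z ∈ A i := hcover z hz
    simp only [hidxdef, dif_pos h]
    exact h.choose_spec
  set tg : ℕ → ℕ := fun s => (Nat.unpair (s / 2)).1 with htg
  have htglt : ∀ s, 1 ≤ s → tg s < s := by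
    intro s hs
    calc (Nat.unpair (s / 2)).1 ≤ s / 2 := Nat.unpair_left_le _
      _ < s := Nat.div_lt_self (by omega) (by omega)
  have pick : ∀ (s : ℕ) (f : ℕ → X), f (tg s) ∈ C →
      ∃ q, (q ∈ ball (f (tg s)) ((1/2 : ℝ)^s) ∩ C) ∧ ∀ j, j < s → ∀ k, q ∉ N (idx (f j)) k := by
    intro s f hf
    rcases Nat.eq_zero_or_pos s with rfl | hs
    · refine ⟨f (tg 0), ⟨mem_ball_self (show (0:ℝ) < (1/2 : ℝ)^0 from by norm_num), hf⟩, by omega⟩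
    obtain ⟨q, hq1, hq2⟩ := baire_avoid hcl (fun k => N (idx (f (k % s))) (k / s))
      (fun k => hNcl _ _)
      (fun k O hO hOne => hNnwd _ _ O hO hOne)
      isOpen_ball ⟨f (tg s), mem_ball_self (show (0:ℝ) < (1/2 : ℝ)^s from pow_pos (by norm_num) s), hf⟩
    refine ⟨q, hq1, ?_⟩
    intro j hj k
    have h := hq2 (k * s + j)
    have hks : k * s + j = s * k + j := by ring
    have h1 : (k * s + j) % s = j := by
      rw [hks, Nat.mul_add_mod]
      exact Nat.mod_eq_of_lt hj
    have h2 : (k * s + j) / s = k := by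
      rw [hks, Nat.mul_add_div hs]
      simp [Nat.div_eq_of_lt hj]
    rwa [h1, h2] at h
  set ps : ℕ → (ℕ → X) := fun s => Nat.rec (motive := fun _ => ℕ → X) (fun _ => z₀)
    (fun k f => fun t => if t = k + 1 then
      (if h : f (tg (k + 1)) ∈ C then (pick (k + 1) f h).choose else z₀) else f t) s
    with hps
  have hpssucc : ∀ k, ps (k + 1) = fun t => if t = k + 1 then
      (if h : ps k (tg (k + 1)) ∈ C then (pick (k + 1) (ps k) h).choose else z₀)
      else ps k t := fun k => rfl
  set p : ℕ → X := fun t => ps t t with hp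
  have hstab : ∀ s t, t ≤ s → ps s t = p t := by
    intro s
    induction s with
    | zero => intro t ht; have : t = 0 := by omega
              subst this; rfl
    | succ k ih =>
      intro t ht
      rcases eq_or_lt_of_le ht with rfl | hlt
      · rfl
      · have ht' : t ≤ k := by omega
        have h1 : ps (k + 1) t = ps k t := by
          rw [hpssucc k]
          simp only [if_neg (by omega : ¬ t = k + 1)]
        rw [h1, ih t ht']
  have hpC : ∀ s : ℕ, p s ∈ C ∧ (1 ≤ s →
      dist (p s) (p (tg s)) < (1/2 : ℝ)^s ∧ ∀ j, j < s → ∀ k, p s ∉ N (idx (p j)) k) := by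
    intro s
    induction s using Nat.strong_induction_on with
    | _ s ih =>
      rcases Nat.eq_zero_or_pos s with rfl | hs
      · exact ⟨hz₀, by omega⟩
      obtain ⟨k, rfl⟩ : ∃ k, s = k + 1 := ⟨s - 1, by omega⟩
      have htgk : tg (k + 1) ≤ k := by have := htglt (k + 1) (by omega); omega
      have hfC : ps k (tg (k + 1)) ∈ C := by
        rw [hstab k _ htgk]
        exact (ih (tg (k + 1)) (by omega)).1
      have hpdef : p (k + 1) = (pick (k + 1) (ps k) hfC).choose := by
        show ps (k + 1) (k + 1) = _
        rw [hpssucc k]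
        simp only [if_pos rfl, dif_pos hfC, if_true]
      obtain ⟨⟨hball, hC⟩, hfresh⟩ := (pick (k + 1) (ps k) hfC).choose_spec
      constructor
      · rw [hpdef]; exact hC
      · intro _
        constructor
        · have h2 : dist (p (k + 1)) (p (tg (k + 1))) < (1/2 : ℝ)^(k+1) := by
            rw [hpdef, ← hstab k _ htgk]
            exact mem_ball.1 hball
          exact h2
        · intro j hj k'
          have h := hfresh j (by omega) k'
          rw [hstab k j (by omega)] at h
          rw [hpdef]
          exact h
  have hpmem : ∀ s, p s ∈ C := fun s => (hpC s).1
  have hdistinct : ∀ j s, j < s → idx (p s) ≠ idx (p j) := by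
    intro j s hj hEq
    have h1 : p s ∈ A (idx (p s)) := hidx _ (hpmem s)
    rw [hEq] at h1
    have h2 : p s ∈ ⋃ k, N (idx (p j)) k := hNsub _ ⟨h1, hpmem s⟩
    obtain ⟨k, hk⟩ := mem_iUnion.1 h2
    exact ((hpC s).2 (by omega)).2 j hj k hk
  have hdistinct' : ∀ j s, j ≠ s → idx (p s) ≠ idx (p j) := by
    intro j s hne
    rcases lt_or_gt_of_ne hne with h | h
    · exact hdistinct j s h
    · exact fun hEq => hdistinct s j h hEq.symm
  set J : Set ι := {i | ∃ s, s % 2 = 0 ∧ idx (p s) = i} with hJ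
  obtain ⟨Cs, hCscl, hCseq⟩ := hFsJ J
  obtain ⟨Cs', hCs'cl, hCs'eq⟩ := hFsJ Jᶜ
  set Z := closure (range p) with hZ
  have hZcl : IsClosed Z := isClosed_closure
  have hZC : Z ⊆ C := closure_minimal (range_subset_iff.2 hpmem) hcl
  have hdense : ∀ t : ℕ, ∀ η : ℝ, 0 < η → ∀ b, b < 2 → ∃ s, s % 2 = b ∧ dist (p s) (p t) < η := by
    intro t η hη b hb
    obtain ⟨j₀, hj₀⟩ := exists_pow_lt_of_lt_one hη (show (1:ℝ)/2 < 1 by norm_num)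
    set s := 2 * Nat.pair t (j₀ + 1) + b with hsdef
    have hs1 : 1 ≤ s := by have := Nat.right_le_pair t (j₀ + 1); omega
    have htgs : tg s = t := by
      show (Nat.unpair (s / 2)).1 = t
      have hdiv : s / 2 = Nat.pair t (j₀ + 1) := by omega
      rw [hdiv, Nat.unpair_pair]
    have hd := ((hpC s).2 hs1).1
    rw [htgs] at hd
    have hsj : j₀ ≤ s := by have := Nat.right_le_pair t (j₀ + 1); omega
    have hpow : ((1:ℝ)/2)^s ≤ (1/2)^j₀ :=
      pow_le_pow_of_le_one (by norm_num) (by norm_num) hsj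
    exact ⟨s, by omega, hd.trans_le (hpow.trans hj₀.le)⟩
  have hevenJ : ∀ s, s % 2 = 0 → p s ∈ ⋃ k, Cs k := by
    intro s hs
    rw [← hCseq]
    exact mem_biUnion ⟨s, hs, rfl⟩ (hidx _ (hpmem s))
  have hoddJ : ∀ s, s % 2 = 1 → p s ∉ ⋃ k, Cs k := by
    intro s hs hmem
    rw [← hCseq] at hmem
    obtain ⟨i, hiJ, hi⟩ := mem_iUnion₂.1 hmem
    have hieq : i = idx (p s) := hdisj i (idx (p s)) (p s) hi (hidx _ (hpmem s))
    obtain ⟨s', hs', hs'i⟩ := hiJ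
    have hne : s' ≠ s := fun h => by rw [h] at hs'; omega
    exact hdistinct' s' s hne ((hs'i.trans hieq).symm)
  have hoddJ' : ∀ s, s % 2 = 1 → p s ∈ ⋃ k, Cs' k := by
    intro s hs
    rw [← hCs'eq]
    refine mem_biUnion ?_ (hidx _ (hpmem s))
    intro hmem
    obtain ⟨s', hs', hs'i⟩ := hmem
    have hne : s' ≠ s := fun h => by rw [h] at hs'; omega
    exact hdistinct' s' s hne hs'i.symm
  have hevenJ' : ∀ s, s % 2 = 0 → p s ∉ ⋃ k, Cs' k := by
    intro s hs hmem
    rw [← hCs'eq] at hmem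
    obtain ⟨i, hiJ, hi⟩ := mem_iUnion₂.1 hmem
    have hieq : i = idx (p s) := hdisj i (idx (p s)) (p s) hi (hidx _ (hpmem s))
    exact hiJ (by rw [hieq]; exact ⟨s, hs, rfl⟩)
  set NN : ℕ → Set X := fun k => if k % 2 = 0 then Cs (k / 2) else Cs' (k / 2) with hNN
  have hNNcl : ∀ k, IsClosed (NN k) := by
    intro k
    by_cases hk : k % 2 = 0 <;> simp only [hNN, hk, if_pos, if_neg, if_true, if_false] <;>
      first | exact hCscl _ | exact hCs'cl _
  have hNNnwd : ∀ k O, IsOpen O → (O ∩ Z).Nonempty → ¬(O ∩ Z ⊆ NN k) := by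
    rintro k O hO ⟨w, hwO, hwZ⟩ hsub
    obtain ⟨η₀, hη₀, hball₀⟩ := Metric.isOpen_iff.1 hO w hwO
    obtain ⟨y, hyr, hyd⟩ := Metric.mem_closure_iff.1 hwZ η₀ hη₀
    obtain ⟨t, rfl⟩ := hyr
    have hptO : p t ∈ O := hball₀ (mem_ball.2 (by rwa [dist_comm]))
    obtain ⟨η₁, hη₁, hball₁⟩ := Metric.isOpen_iff.1 hO (p t) hptO
    -- choose parity opposite to that of the set NN k
    by_cases hk : k % 2 = 0
    · obtain ⟨s, hspar, hsd⟩ := hdense t η₁ hη₁ 1 (by omega)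
      have hpsO : p s ∈ O := hball₁ (mem_ball.2 hsd)
      have hpsZ : p s ∈ Z := subset_closure (mem_range_self s)
      have hmem := hsub ⟨hpsO, hpsZ⟩
      rw [hNN] at hmem
      simp only [hk, if_true, if_pos] at hmem
      exact hoddJ s hspar (mem_iUnion.2 ⟨k / 2, hmem⟩)
    · obtain ⟨s, hspar, hsd⟩ := hdense t η₁ hη₁ 0 (by omega)
      have hpsO : p s ∈ O := hball₁ (mem_ball.2 hsd)
      have hpsZ : p s ∈ Z := subset_closure (mem_range_self s)
      have hmem := hsub ⟨hpsO, hpsZ⟩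
      rw [hNN] at hmem
      simp only [hk, if_false] at hmem
      exact hevenJ' s hspar (mem_iUnion.2 ⟨k / 2, hmem⟩)
  obtain ⟨z, hz, hzn⟩ := baire_avoid hZcl NN hNNcl hNNnwd isOpen_univ
    ⟨p 0, mem_univ _, subset_closure (mem_range_self 0)⟩
  have hzC : z ∈ C := hZC hz.2
  have hzA : z ∈ A (idx z) := hidx z hzC
  by_cases hzJ : idx z ∈ J
  · have hmem : z ∈ ⋃ k, Cs k := by rw [← hCseq]; exact mem_biUnion hzJ hzA
    obtain ⟨k, hk⟩ := mem_iUnion.1 hmem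
    refine hzn (2 * k) ?_
    have h1 : (2 * k) % 2 = 0 := by omega
    have h2 : (2 * k) / 2 = k := by omega
    rw [hNN]
    simp only [h1, h2, if_true, if_pos]
    exact hk
  · have hmem : z ∈ ⋃ k, Cs' k := by rw [← hCs'eq]; exact mem_biUnion hzJ hzA
    obtain ⟨k, hk⟩ := mem_iUnion.1 hmem
    refine hzn (2 * k + 1) ?_
    have h1 : ¬ ((2 * k + 1) % 2 = 0) := by omega
    have h2 : (2 * k + 1) / 2 = k := by omega
    rw [hNN]
    simp only [h1, h2, if_false]
    exact hk


lemma corestar [CompleteSpace X] {E : Set X} (r : X → E)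
    (hfix : ∀ x : E, r ↑x = x) (hleb : LebesgueClassOne r)
    {ε : ℝ} (hε : 0 < ε) (V : ℕ → E → Set E)
    (hVopen : ∀ n γ, IsOpen (V n γ))
    (hVdiam : ∀ n γ y, y ∈ V n γ → dist (y : X) (γ : X) < ε/6)
    (hVdisj : ∀ n γ γ', γ ≠ γ' → ∀ w, w ∈ V n γ → w ∈ V n γ' → False)
    (hVcover : ∀ x : E, ∃ n γ, x ∈ V n γ)
    (F : Set X) (hFcl : IsClosed F) (hFne : F.Nonempty) :
    ∃ O, IsOpen O ∧ (O ∩ F).Nonempty ∧ ∃ M, IsFsigma M ∧ M ∩ E = ∅ ∧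
      O ∩ F ∩ {z | ε ≤ dist z ((r z : X))} ⊆ M := by
  classical
  have hSn : ∀ n : ℕ, IsFsigma (r ⁻¹' (⋃ γ, V n γ)) :=
    fun n => hleb _ (isOpen_iUnion fun γ => hVopen n γ)
  choose CS hCScl hCSeq using hSn
  have htrap1 : ∃ n k O₀, IsOpen O₀ ∧ (O₀ ∩ F).Nonempty ∧ O₀ ∩ F ⊆ CS n k := by
    by_contra hcon
    push_neg at hcon
    obtain ⟨z, hz, hzn⟩ := baire_avoid hFcl
      (fun i => CS (Nat.unpair i).1 (Nat.unpair i).2)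
      (fun i => hCScl _ _)
      (fun i O hO hOne => hcon _ _ O hO hOne)
      isOpen_univ (by simpa using hFne)
    obtain ⟨n, γ, hγ⟩ := hVcover (r z)
    have hzpre : z ∈ r ⁻¹' (⋃ γ, V n γ) := mem_preimage.2 (mem_iUnion.2 ⟨γ, hγ⟩)
    rw [hCSeq n] at hzpre
    obtain ⟨k, hk⟩ := mem_iUnion.1 hzpre
    exact hzn (Nat.pair n k) (by rwa [Nat.unpair_pair])
  obtain ⟨n, k, O₀, hO₀op, hO₀ne, hO₀sub⟩ := htrap1
  set Cl := closure (O₀ ∩ F) with hCl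
  have hClcl : IsClosed Cl := isClosed_closure
  have hClne : Cl.Nonempty := hO₀ne.mono subset_closure
  have hClsub : Cl ⊆ CS n k := closure_minimal hO₀sub (hCScl n k)
  have hClpre : Cl ⊆ r ⁻¹' (⋃ γ, V n γ) := by
    intro z hz
    rw [hCSeq n]
    exact mem_iUnion.2 ⟨k, hClsub hz⟩
  have hAγ : ∀ γ : E, IsFsigma (r ⁻¹' (V n γ)) := fun γ => hleb _ (hVopen n γ)
  choose D hDcl hDeq using hAγ
  by_cases htrap2 : ∃ (γ : E) (k' : ℕ) (O₁ : Set X),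
      IsOpen O₁ ∧ (O₁ ∩ Cl).Nonempty ∧ O₁ ∩ Cl ⊆ D γ k'
  · obtain ⟨γ, k', O₁, hO₁op, hO₁ne, hO₁sub⟩ := htrap2
    refine ⟨O₀ ∩ O₁, hO₀op.inter hO₁op, ?_, ?_⟩
    · obtain ⟨w, hw1, hw2⟩ := hO₁ne
      obtain ⟨y, hyO₁, hyOF⟩ := _root_.mem_closure_iff.1 hw2 O₁ hO₁op hw1
      exact ⟨y, ⟨hyOF.1, hyO₁⟩, hyOF.2⟩
    · set K := {z : X | 5*ε/6 ≤ dist z (γ : X)} with hK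
      have hKcl : IsClosed K := isClosed_le continuous_const (continuous_id.dist continuous_const)
      refine ⟨D γ k' ∩ K, isFsigma_of_isClosed ((hDcl γ k').inter hKcl), ?_, ?_⟩
      · rw [eq_empty_iff_forall_notMem]
        rintro e ⟨⟨heD, heK⟩, heE⟩
        have hepre : e ∈ r ⁻¹' (V n γ) := by
          rw [hDeq γ]
          exact mem_iUnion.2 ⟨k', heD⟩
        have hdist := hVdiam n γ (r e) hepre
        have hre : r e = ⟨e, heE⟩ := hfix ⟨e, heE⟩
        rw [hre] at hdist
        have h5 : 5*ε/6 ≤ dist e (γ : X) := heK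
        simp only at hdist
        linarith
      · rintro z ⟨⟨hzO, hzF⟩, hzT⟩
        have hzCl : z ∈ Cl := subset_closure ⟨hzO.1, hzF⟩
        have hzD : z ∈ D γ k' := hO₁sub ⟨hzO.2, hzCl⟩
        refine ⟨hzD, ?_⟩
        have hzpre : z ∈ r ⁻¹' (V n γ) := by
          rw [hDeq γ]
          exact mem_iUnion.2 ⟨k', hzD⟩
        have h1 : dist ((r z : X)) (γ : X) < ε/6 := hVdiam n γ (r z) hzpre
        have h2 : ε ≤ dist z ((r z : X)) := hzT
        have h3 : dist z ((r z : X)) ≤ dist z (γ : X) + dist ((r z : X)) (γ : X) :=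
          dist_triangle_right _ _ _
        show 5*ε/6 ≤ dist z (γ : X)
        linarith
  · push_neg at htrap2
    exfalso
    apply crux (fun γ : E => r ⁻¹' (V n γ)) Cl hClcl hClne
    · intro z hz
      have := hClpre hz
      rw [mem_preimage, mem_iUnion] at this
      obtain ⟨γ, hγ⟩ := this
      exact ⟨γ, hγ⟩
    · intro γ γ' z hzγ hzγ'
      by_contra hne
      exact hVdisj n γ γ' hne (r z) hzγ hzγ'
    · intro J
      obtain ⟨Cs, h1, h2⟩ := hleb (⋃ γ ∈ J, V n γ) (isOpen_biUnion fun γ _ => hVopen n γ)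
      refine ⟨Cs, h1, ?_⟩
      rw [← h2, preimage_iUnion₂]
    · exact fun γ k' => hDcl γ k'
    · intro γ z hz
      rw [← hDeq γ]
      exact hz.1
    · exact fun γ k' O hO hOne => htrap2 γ k' O hO hOne


lemma dir1 {E : Set X} (hne : E.Nonempty) (hGδ : IsGδ E) : IsH1Retract E := by
  classical
  -- get a decreasing sequence of open sets with intersection E
  obtain ⟨G, hGopen, hGE⟩ : ∃ G : ℕ → Set X, (∀ n, IsOpen (G n)) ∧ E = ⋂ n, G n := by
    obtain ⟨T, hTopen, hTct, rfl⟩ := hGδ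
    rcases eq_empty_or_nonempty T with rfl | hTne
    · exact ⟨fun _ => univ, fun _ => isOpen_univ, by simp⟩
    · obtain ⟨f, rfl⟩ := hTct.exists_eq_range hTne
      exact ⟨f, fun n => hTopen _ (mem_range_self n), by rw [sInter_range]⟩
  set GG : ℕ → Set X := fun n => Nat.rec univ (fun k S => S ∩ G k) n with hGG
  have hGGsucc : ∀ n, GG (n + 1) = GG n ∩ G n := fun n => rfl
  have hGGopen : ∀ n, IsOpen (GG n) := by
    intro n; induction n with
    | zero => exact isOpen_univ
    | succ k ih => rw [hGGsucc]; exact ih.inter (hGopen k)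
  have hGGstep : ∀ n, GG (n + 1) ⊆ GG n := fun n => by rw [hGGsucc]; exact inter_subset_left
  have hGGanti : ∀ m n, m ≤ n → GG n ⊆ GG m := by
    intro m n h
    induction h with
    | refl => exact subset_rfl
    | step _ ih => rename_i k hk; exact (hGGstep k).trans ih
  have hEGG : ∀ n, E ⊆ GG n := by
    intro n; induction n with
    | zero => exact subset_univ E
    | succ k ih =>
      rw [hGGsucc]
      exact subset_inter ih (by rw [hGE]; exact iInter_subset G k)
  have hex : ∀ z, z ∉ E → ∃ n, z ∉ GG (n + 1) := by
    intro z hz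
    by_contra h
    push_neg at h
    apply hz
    rw [hGE, mem_iInter]
    intro n
    have := h n
    rw [hGGsucc] at this
    exact this.2
  set ρ : ℕ → ℝ := fun n => 1 / (n + 1) with hρ
  have hρpos : ∀ n, 0 < ρ n := fun n => by positivity
  have hρanti : ∀ m n, m ≤ n → ρ n ≤ ρ m := by
    intro m n h
    apply one_div_le_one_div_of_le (by positivity)
    have : (m : ℝ) ≤ n := Nat.cast_le.2 h
    linarith
  -- well-order on X
  have wf : WellFounded (WellOrderingRel : X → X → Prop) :=
    (WellOrderingRel.isWellOrder).toIsWellFounded.wf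
  have hcand : ∀ (z : X) (n : ℕ), ({x : X | dist z x < ρ n}).Nonempty :=
    fun z n => ⟨z, by simp [hρpos n]⟩
  -- choice of a nearly-nearest point of E
  have eChSpec : ∀ (n : ℕ) (x : X), ∃ e, e ∈ E ∧ dist x e < infDist x E + ρ n := by
    intro n x
    have := (infDist_lt_iff hne).1 (lt_add_of_pos_right (infDist x E) (hρpos n))
    rcases this with ⟨e, he, hd⟩
    exact ⟨e, he, hd⟩
  set eCh : ℕ → X → X := fun n x => (eChSpec n x).choose with heCh
  have heChE : ∀ n x, eCh n x ∈ E := fun n x => (eChSpec n x).choose_spec.1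
  have heChd : ∀ n x, dist x (eCh n x) < infDist x E + ρ n := fun n x =>
    (eChSpec n x).choose_spec.2
  set nfun : ∀ z, z ∉ E → ℕ := fun z hz => Nat.find (hex z hz) with hnfun
  have hnfind : ∀ z (hz : z ∉ E), nfun z hz = Nat.find (hex z hz) := fun _ _ => rfl
  set cfun : ∀ z, z ∉ E → X := fun z hz =>
    wf.min {x : X | dist z x < ρ (nfun z hz)} (hcand z _) with hcfun
  set r : X → E := fun z =>
    if hz : z ∈ E then ⟨z, hz⟩ else ⟨eCh (nfun z hz) (cfun z hz), heChE _ _⟩ with hr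
  have hfix : ∀ x : E, r x = x := by
    intro x
    simp only [hr, dif_pos x.2]
  have hrE : ∀ z (hz : z ∉ E), (r z : X) = eCh (nfun z hz) (cfun z hz) := by
    intro z hz
    simp only [hr, dif_neg hz]
  have hP1 : ∀ z (hz : z ∉ E), dist z (cfun z hz) < ρ (nfun z hz) :=
    fun z hz => wf.min_mem {x : X | dist z x < ρ (nfun z hz)} (hcand z _)
  have hP2 : ∀ z (hz : z ∉ E) y, WellOrderingRel y (cfun z hz) → ¬ dist z y < ρ (nfun z hz) :=
    fun z hz y hy hd => wf.not_lt_min {x : X | dist z x < ρ (nfun z hz)} hd hy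
  have hP4 : ∀ z (hz : z ∉ E), z ∉ GG (nfun z hz + 1) := fun z hz => Nat.find_spec (hex z hz)
  have hP3 : ∀ z (hz : z ∉ E), z ∈ GG (nfun z hz) := by
    intro z hz
    rcases Nat.eq_zero_or_pos (nfun z hz) with h0 | hpos
    · rw [h0]; exact mem_univ z
    · obtain ⟨k, hk⟩ : ∃ k, nfun z hz = k + 1 := ⟨nfun z hz - 1, by omega⟩
      have hkfind : k < Nat.find (hex z hz) := by rw [← hnfind z hz]; omega
      have := Nat.find_min (hex z hz) hkfind
      rw [hk]
      exact not_not.1 this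
  have hKey : ∀ z (hz : z ∉ E) (e : X), e ∈ E →
      dist ((r z : X)) e ≤ 3 * ρ (nfun z hz) + 2 * dist z e := by
    intro z hz e he
    have hrz := hrE z hz
    have h1 : dist (cfun z hz) (eCh (nfun z hz) (cfun z hz)) <
        infDist (cfun z hz) E + ρ (nfun z hz) := heChd _ _
    have h2 : infDist (cfun z hz) E ≤ dist (cfun z hz) e := infDist_le_dist_of_mem he
    have h3 : dist z (cfun z hz) < ρ (nfun z hz) := hP1 z hz
    have h4 : dist (cfun z hz) e ≤ dist (cfun z hz) z + dist z e := dist_triangle _ _ _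
    have h5 : dist ((r z : X)) e ≤ dist (eCh (nfun z hz) (cfun z hz)) (cfun z hz) +
        dist (cfun z hz) e := by rw [hrz]; exact dist_triangle _ _ _
    have h6 : dist (eCh (nfun z hz) (cfun z hz)) (cfun z hz)
        = dist (cfun z hz) (eCh (nfun z hz) (cfun z hz)) := dist_comm _ _
    have h7 : dist (cfun z hz) z = dist z (cfun z hz) := dist_comm _ _
    linarith
  have hCont : ∀ e, e ∈ E → ∀ ε, 0 < ε → ∃ δ, 0 < δ ∧ ∃ n₀ : ℕ,
      ∀ z, dist z e < δ → z ∈ GG n₀ → dist ((r z : X)) e < ε := by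
    intro e he ε hε
    obtain ⟨n₀, hn₀⟩ := exists_nat_one_div_lt (show (0:ℝ) < ε/6 by linarith)
    refine ⟨ε/6, by linarith, n₀, ?_⟩
    intro z hzd hzG
    by_cases hz : z ∈ E
    · have : r z = ⟨z, hz⟩ := by simp only [hr, dif_pos hz]
      rw [this]
      calc dist z e < ε/6 := hzd
        _ < ε := by linarith
    · have hn : n₀ ≤ nfun z hz := by
        by_contra h
        push_neg at h
        exact hP4 z hz (hGGanti (nfun z hz + 1) n₀ (by omega) hzG)
      have hρn : ρ (nfun z hz) ≤ ρ n₀ := hρanti _ _ hn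
      have hρ0 : ρ n₀ < ε/6 := hn₀
      have hk := hKey z hz e he
      calc dist ((r z : X)) e ≤ 3 * ρ (nfun z hz) + 2 * dist z e := hk
        _ < 3 * (ε/6) + 2 * (ε/6) := by
            have := hρn.trans_lt hρ0
            nlinarith
        _ < ε := by linarith
  refine ⟨r, hfix, ?_⟩
  intro V hV
  obtain ⟨U, hUopen, hUV⟩ := isOpen_induced_iff.1 hV
  have hmemV : ∀ w : E, w ∈ V ↔ (w : X) ∈ U := by
    intro w
    rw [← hUV]
    rfl
  -- the open part coming from continuity at points of E
  have hOc : ∀ e : E, r e ∈ V → ∃ δ, 0 < δ ∧ ∃ n₀ : ℕ,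
      ∀ z, dist z (e : X) < δ → z ∈ GG n₀ → r z ∈ V := by
    intro e hev
    rw [hfix e] at hev
    have heU : (e : X) ∈ U := (hmemV e).1 hev
    obtain ⟨ε, hε, hball⟩ := Metric.isOpen_iff.1 hUopen _ heU
    obtain ⟨δ, hδ, n₀, hzz⟩ := hCont (e : X) e.2 ε hε
    refine ⟨δ, hδ, n₀, fun z h1 h2 => ?_⟩
    exact (hmemV (r z)).2 (hball (Metric.mem_ball.2 (hzz z h1 h2)))
  choose δf hδf nf hnf using hOc
  set Oc : Set X := ⋃ (e : E), ⋃ (hev : r ↑e ∈ V),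
    (ball (e : X) (δf e hev) ∩ GG (nf e hev)) with hOcdef
  have hOcopen : IsOpen Oc := isOpen_iUnion fun e => isOpen_iUnion fun hev =>
    Metric.isOpen_ball.inter (hGGopen _)
  have hOcsub : Oc ⊆ r ⁻¹' V := by
    intro z hzOc
    simp only [hOcdef, mem_iUnion, mem_inter_iff] at hzOc
    obtain ⟨e, hev, hz1, hz2⟩ := hzOc
    exact hnf e hev z (Metric.mem_ball.1 hz1) hz2
  have hOcmem : ∀ z (hz : z ∈ E), r z ∈ V → z ∈ Oc := by
    intro z hz hzv
    have hev : r ↑(⟨z, hz⟩ : E) ∈ V := hzv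
    simp only [hOcdef, mem_iUnion, mem_inter_iff]
    exact ⟨⟨z, hz⟩, hev, Metric.mem_ball.2 (by simpa using hδf _ hev), hEGG _ hz⟩
  -- pieces
  set Kx : ℕ → X → Set X := fun n x =>
    (⋃ y ∈ {y : X | WellOrderingRel y x}, ball y (ρ n))ᶜ with hKx
  set Cp : ℕ → X → Set X := fun n x => (GG (n+1))ᶜ ∩ Kx n x with hCp
  set Op : ℕ → X → Set X := fun n x => GG n ∩ ball x (ρ n) with hOp
  have hCpcl : ∀ n x, IsClosed (Cp n x) := fun n x =>
    ((hGGopen (n+1)).isClosed_compl).inter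
      ((isOpen_biUnion fun y _ => Metric.isOpen_ball).isClosed_compl)
  have hOpop : ∀ n x, IsOpen (Op n x) := fun n x => (hGGopen n).inter Metric.isOpen_ball
  have hKxmem : ∀ n x z, z ∈ Kx n x ↔ ∀ y, WellOrderingRel y x → ¬ dist z y < ρ n := by
    intro n x z
    constructor
    · intro h y hy hd
      exact h (mem_biUnion hy (Metric.mem_ball.2 hd))
    · intro h hmem
      obtain ⟨y, hy, hball⟩ := mem_iUnion₂.1 hmem
      exact h y hy (Metric.mem_ball.1 hball)
  have hCpOpmem : ∀ n x z, z ∈ Cp n x ∩ Op n x ↔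
      (z ∉ GG (n+1) ∧ (∀ y, WellOrderingRel y x → ¬ dist z y < ρ n) ∧
        z ∈ GG n ∧ dist z x < ρ n) := by
    intro n x z
    constructor
    · rintro ⟨⟨h1, h2⟩, h3, h4⟩
      exact ⟨h1, (hKxmem n x z).1 h2, h3, Metric.mem_ball.1 h4⟩
    · rintro ⟨h1, h2, h3, h4⟩
      exact ⟨⟨h1, (hKxmem n x z).2 h2⟩, h3, Metric.mem_ball.2 h4⟩
  have hOpsub : ∀ n x, Op n x ⊆ ball x (ρ n) := fun n x => inter_subset_right
  clear_value Op Cp Kx Oc r cfun nfun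
  have hmemPieces : ∀ z (hz : z ∉ E), z ∈ Cp (nfun z hz) (cfun z hz) ∩ Op (nfun z hz) (cfun z hz) := by
    intro z hz
    rw [hCpOpmem]
    exact ⟨hP4 z hz, fun y hy => hP2 z hz y hy, hP3 z hz, hP1 z hz⟩
  have huniq : ∀ z (hz : z ∉ E) n x, z ∈ Cp n x ∩ Op n x → nfun z hz = n ∧ cfun z hz = x := by
    intro z hz n x hmem
    rw [hCpOpmem] at hmem
    obtain ⟨hz1, hz2, hz3, hz4⟩ := hmem
    have hn : nfun z hz = n := by
      rw [hnfind z hz, Nat.find_eq_iff]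
      exact ⟨hz1, fun m hm hmem => hmem (hGGanti (m+1) n (by omega) hz3)⟩
    have hx : cfun z hz = x := by
      rcases trichotomous (r := (WellOrderingRel : X → X → Prop)) (cfun z hz) x with hlt | heq | hgt
      · exfalso
        apply hz2 (cfun z hz) hlt
        rw [← hn]
        exact hP1 z hz
      · exact heq
      · exfalso
        apply hP2 z hz x hgt
        rw [hn]
        exact hz4
    exact ⟨hn, hx⟩
  have hUn : ∀ n : ℕ, IsFsigma (⋃ i : {x : X // eCh n x ∈ U}, Cp n i.1 ∩ Op n i.1) := by
    intro n
    refine isFsigma_iUnion_closed_inter_open (ι := {x : X // eCh n x ∈ U}) (fun i => Cp n i.1) (fun i => Op n i.1)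
      (fun i => hCpcl n i.1) (fun i => hOpop n i.1) (fun i j => ?_)
    rcases trichotomous (r := (WellOrderingRel : X → X → Prop)) i.1 j.1 with hlt | heq | hgt
    · right; left
      rw [Set.disjoint_left]
      rintro z hzm hzball
      have h2 := ((hCpOpmem n j.1 z).1 hzm).2.1
      exact h2 i.1 hlt (Metric.mem_ball.1 (hOpsub n i.1 hzball))
    · right; right; exact Subtype.ext heq
    · left
      rw [Set.disjoint_left]
      rintro z hzm hzball
      have h2 := ((hCpOpmem n i.1 z).1 hzm).2.1
      exact h2 j.1 hgt (Metric.mem_ball.1 (hOpsub n j.1 hzball))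
  have hseteq : r ⁻¹' V = Oc ∪ ⋃ n : ℕ, ⋃ i : {x : X // eCh n x ∈ U}, Cp n i.1 ∩ Op n i.1 := by
    ext z
    constructor
    · intro hzv
      by_cases hz : z ∈ E
      · exact Or.inl (hOcmem z hz hzv)
      · right
        have hiU : eCh (nfun z hz) (cfun z hz) ∈ U := by
          have := (hmemV (r z)).1 hzv
          rwa [hrE z hz] at this
        exact mem_iUnion.2 ⟨nfun z hz, mem_iUnion.2 ⟨⟨cfun z hz, hiU⟩, hmemPieces z hz⟩⟩
    · rintro (hzo | hzu)
      · exact hOcsub hzo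
      · obtain ⟨n, hn'⟩ := mem_iUnion.1 hzu
        obtain ⟨i, hzp⟩ := mem_iUnion.1 hn'
        have hz : z ∉ E := fun hzE => ((hCpOpmem n i.1 z).1 hzp).1 (hEGG (n+1) hzE)
        obtain ⟨hn, hx⟩ := huniq z hz n i.1 hzp
        show r z ∈ V
        rw [hmemV (r z), hrE z hz, hn, hx]
        exact i.2
  rw [hseteq]
  exact isFsigma_union (isFsigma_of_isOpen hOcopen) (isFsigma_iUnion_nat hUn)


end Main

section Key

open Metric

universe u

variable {X : Type u} [MetricSpace X]

lemma dir2 [CompleteSpace X] {E : Set X} (h : IsH1Retract E) : IsGδ E := by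
  classical
  obtain ⟨r, hfix, hleb⟩ := h
  have KEY : ∀ ε : ℝ, 0 < ε → ∃ M, IsFsigma M ∧ M ∩ E = ∅ ∧
      {z | ε ≤ dist z ((r z : X))} ⊆ M := by
    intro ε hε
    obtain ⟨V, hVopen, hVdiam0, hVdisj, hVcover⟩ :=
      stone (Y := E) (show (0:ℝ) < ε/6 by linarith)
    have hVdiam : ∀ n γ y, y ∈ V n γ → dist (y : X) (γ : X) < ε/6 := by
      intro n γ y hy
      have := hVdiam0 n γ y hy
      rwa [Subtype.dist_eq] at this
    set T := {z : X | ε ≤ dist z ((r z : X))} with hT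
    set g : Set X → Set X := fun F =>
      F \ ⋃₀ {O | IsOpen O ∧ ∃ M, IsFsigma M ∧ M ∩ E = ∅ ∧ O ∩ F ∩ T ⊆ M} with hg
    have hgdefl : ∀ s, g s ⊆ s := fun s => diff_subset
    have hgmono : Monotone g := by
      intro F F' hFF' z hz
      refine ⟨hFF' hz.1, ?_⟩
      intro hmem
      obtain ⟨O, hOP, hzO⟩ := hmem
      apply hz.2
      obtain ⟨M, hM1, hM2, hM3⟩ := hOP.2
      exact ⟨O, ⟨hOP.1, M, hM1, hM2, fun w hw => hM3 ⟨⟨hw.1.1, hFF' hw.1.2⟩, hw.2⟩⟩, hzO⟩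
    have hgcl : ∀ s, IsClosed s → IsClosed (g s) := by
      intro s hs
      exact hs.sdiff (isOpen_sUnion fun O hO => hO.1)
    obtain ⟨α₀, hα₀⟩ := derivChain_fix g hgmono hgdefl
    have hFccl : ∀ α, IsClosed (derivChain g α) := derivChain_isClosed g hgcl
    have hempty : derivChain g α₀ = ∅ := by
      by_contra hne
      obtain ⟨O, hOop, hOne, M, hM1, hM2, hM3⟩ := corestar r hfix hleb hε V hVopen hVdiam
        hVdisj hVcover (derivChain g α₀) (hFccl α₀) (nonempty_iff_ne_empty.2 hne)
      obtain ⟨z, hz1, hz2⟩ := hOne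
      have hzfix : z ∈ derivChain g (α₀ + 1) := by rw [hα₀]; exact hz2
      rw [derivChain_succ g hgmono] at hzfix
      exact hzfix.2 ⟨O, ⟨hOop, M, hM1, hM2, hM3⟩, hz1⟩
    have wf : WellFounded (WellOrderingRel : Set X → Set X → Prop) :=
      (WellOrderingRel.isWellOrder).toIsWellFounded.wf
    set Good : Ordinal.{u} → Set X → Prop := fun α O =>
      IsOpen O ∧ ∃ M, IsFsigma M ∧ M ∩ E = ∅ ∧ O ∩ derivChain g α ∩ T ⊆ M with hGood
    have hMof : ∀ (α : Ordinal.{u}) O, Good α O → ∃ NN : ℕ → Set X,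
        (∀ j, IsClosed (NN j)) ∧ (⋃ j, NN j) ∩ E = ∅ ∧
        O ∩ derivChain g α ∩ T ⊆ ⋃ j, NN j := by
      rintro α O ⟨hOop, M, ⟨NN, hNN1, hNN2⟩, hM2, hM3⟩
      exact ⟨NN, hNN1, by rw [← hNN2]; exact hM2, by rw [← hNN2]; exact hM3⟩
    choose NNf hNNcl hNNE hNNsub using hMof
    set KK : Ordinal.{u} → Set X → Set X := fun α O =>
      (⋃₀ {O' | (Good α O' ∧ WellOrderingRel O' O)})ᶜ with hKK
    have hKKcl : ∀ α O, IsClosed (KK α O) := fun α O =>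
      (isOpen_sUnion fun O' hO' => hO'.1.1).isClosed_compl
    set Mlev : Ordinal.{u} → Set X := fun α =>
      ⋃ (j : ℕ) (O : {O : Set X // Good α O}),
        (NNf α O.1 O.2 j ∩ KK α O.1 ∩ derivChain g α) ∩ O.1 with hMlev
    have hMlevFs : ∀ α, IsFsigma (Mlev α) := by
      intro α
      apply isFsigma_iUnion_nat
      intro j
      apply isFsigma_iUnion_closed_inter_open (ι := {O : Set X // Good α O})
        (fun O => NNf α O.1 O.2 j ∩ KK α O.1 ∩ derivChain g α) (fun O => O.1)
        (fun O => ((hNNcl α O.1 O.2 j).inter (hKKcl α O.1)).inter (hFccl α))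
        (fun O => O.2.1)
      intro i j'
      rcases trichotomous (r := (WellOrderingRel : Set X → Set X → Prop)) i.1 j'.1
        with hlt | heq | hgt
      · right; left
        rw [Set.disjoint_left]
        rintro z ⟨⟨⟨_, hzK⟩, _⟩, _⟩ hzO
        exact hzK ⟨i.1, ⟨i.2, hlt⟩, hzO⟩
      · right; right; exact Subtype.ext heq
      · left
        rw [Set.disjoint_left]
        rintro z ⟨⟨⟨_, hzK⟩, _⟩, _⟩ hzO
        exact hzK ⟨j'.1, ⟨j'.2, hgt⟩, hzO⟩
    have hMlevE : ∀ α, Mlev α ∩ E = ∅ := by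
      intro α
      rw [eq_empty_iff_forall_notMem]
      rintro z ⟨hzM, hzE⟩
      obtain ⟨j, hj⟩ := mem_iUnion.1 hzM
      obtain ⟨O, hO⟩ := mem_iUnion.1 hj
      have hzNN : z ∈ (⋃ j, NNf α O.1 O.2 j) ∩ E := ⟨mem_iUnion.2 ⟨j, hO.1.1.1⟩, hzE⟩
      rw [hNNE α O.1 O.2] at hzNN
      exact hzNN
    have hMlevsub : ∀ α, Mlev α ⊆ derivChain g α := by
      intro α z hz
      obtain ⟨j, hj⟩ := mem_iUnion.1 hz
      obtain ⟨O, hO⟩ := mem_iUnion.1 hj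
      exact hO.1.2
    have htrace : ∀ α z, z ∈ T → z ∈ derivChain g α → z ∉ derivChain g (α + 1) →
        z ∈ Mlev α := by
      intro α z hzT hz1 hz2
      rw [derivChain_succ g hgmono] at hz2
      have hzU : z ∈ ⋃₀ {O | Good α O} := by
        by_contra hno
        exact hz2 ⟨hz1, hno⟩
      set S := {O : Set X | Good α O ∧ z ∈ O} with hS
      have hSne : S.Nonempty := by
        obtain ⟨O, hOP, hzO⟩ := hzU
        exact ⟨O, hOP, hzO⟩
      have hOmin := wf.min_mem S hSne
      have hzM : z ∈ ⋃ j, NNf α (wf.min S hSne) hOmin.1 j :=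
        hNNsub α (wf.min S hSne) hOmin.1 ⟨⟨hOmin.2, hz1⟩, hzT⟩
      obtain ⟨j, hj⟩ := mem_iUnion.1 hzM
      refine mem_iUnion.2 ⟨j, mem_iUnion.2 ⟨⟨wf.min S hSne, hOmin.1⟩, ⟨⟨⟨hj, ?_⟩, hz1⟩, hOmin.2⟩⟩⟩
      intro hmem
      obtain ⟨O', hO', hzO'⟩ := hmem
      exact wf.not_lt_min S ⟨hO'.1, hzO'⟩ hO'.2
    choose Pa hPacl hPaeq using hMlevFs
    have hPasub : ∀ α j, Pa α j ⊆ Mlev α := by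
      intro α j z hz
      rw [hPaeq α]
      exact mem_iUnion.2 ⟨j, hz⟩
    set M : Set X := ⋃ (j : ℕ), ⋃ (a : {β : Ordinal.{u} // β < α₀}),
      Pa a.1 j ∩ (derivChain g (a.1 + 1))ᶜ with hM
    have hMFs : IsFsigma M := by
      apply isFsigma_iUnion_nat
      intro j
      apply isFsigma_iUnion_closed_inter_open (ι := {β : Ordinal.{u} // β < α₀})
        (fun a => Pa a.1 j) (fun a => (derivChain g (a.1 + 1))ᶜ)
        (fun a => hPacl a.1 j) (fun a => (hFccl (a.1 + 1)).isOpen_compl)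
      intro a b
      rcases lt_trichotomy a.1 b.1 with hlt | heq | hgt
      · right; left
        rw [Set.disjoint_left]
        rintro z ⟨hz1, _⟩ hz2
        have hsub : derivChain g b.1 ⊆ derivChain g (a.1 + 1) := by
          apply derivChain_anti
          rw [Ordinal.add_one_eq_succ, Order.succ_le_iff]
          exact hlt
        exact hz2 (hsub (hMlevsub b.1 (hPasub b.1 j hz1)))
      · right; right; exact Subtype.ext heq
      · left
        rw [Set.disjoint_left]
        rintro z ⟨hz1, _⟩ hz2
        have hsub : derivChain g a.1 ⊆ derivChain g (b.1 + 1) := by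
          apply derivChain_anti
          rw [Ordinal.add_one_eq_succ, Order.succ_le_iff]
          exact hgt
        exact hz2 (hsub (hMlevsub a.1 (hPasub a.1 j hz1)))
    have hME : M ∩ E = ∅ := by
      rw [eq_empty_iff_forall_notMem]
      rintro z ⟨hzM, hzE⟩
      obtain ⟨j, hj⟩ := mem_iUnion.1 hzM
      obtain ⟨a, ha⟩ := mem_iUnion.1 hj
      have : z ∈ Mlev a.1 ∩ E := ⟨hPasub a.1 j ha.1, hzE⟩
      rw [hMlevE a.1] at this
      exact this
    refine ⟨M, hMFs, hME, ?_⟩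
    intro z hzT
    have hSne : ({α : Ordinal.{u} | z ∉ derivChain g α}).Nonempty :=
      ⟨α₀, show z ∉ derivChain g α₀ by rw [hempty]; exact notMem_empty z⟩
    set γ := wellFounded_lt.min {α : Ordinal.{u} | z ∉ derivChain g α} hSne with hγ
    have hγmem : z ∉ derivChain g γ := wellFounded_lt.min_mem _ hSne
    have hγmin : ∀ β, β < γ → z ∈ derivChain g β := by
      intro β hβ
      by_contra hno
      exact wellFounded_lt.not_lt_min {α : Ordinal.{u} | z ∉ derivChain g α} hno hβ
    have hγle : γ ≤ α₀ := by
      by_contra hno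
      push_neg at hno
      have := hγmin α₀ hno
      rw [hempty] at this
      exact this
    rcases Ordinal.zero_or_succ_or_isSuccLimit γ with h0 | ⟨δ, hδ⟩ | hlim
    · exfalso
      rw [h0, derivChain_zero] at hγmem
      exact hγmem (mem_univ z)
    · have hδ1 : γ = δ + 1 := by rw [← hδ, Ordinal.add_one_eq_succ]
      have hδγ : δ < γ := by rw [hδ1, Ordinal.add_one_eq_succ]; exact Order.lt_succ δ
      have hz1 : z ∈ derivChain g δ := hγmin δ hδγ
      have hz2 : z ∉ derivChain g (δ + 1) := by rw [← hδ1]; exact hγmem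
      have hzMl : z ∈ Mlev δ := htrace δ z hzT hz1 hz2
      rw [hPaeq δ] at hzMl
      obtain ⟨j, hj⟩ := mem_iUnion.1 hzMl
      have hδα₀ : δ < α₀ := lt_of_lt_of_le hδγ hγle
      exact mem_iUnion.2 ⟨j, mem_iUnion.2 ⟨⟨δ, hδα₀⟩, ⟨hj, hz2⟩⟩⟩
    · exfalso
      have hEx : ∃ β, β < γ ∧ z ∉ g (derivChain g β) := by
        by_contra hall
        push_neg at hall
        exact hγmem ((mem_derivChain_iff g γ z).2 hall)
      obtain ⟨β, hβ, hzβ⟩ := hEx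
      have hsucc : β + 1 < γ := by
        rw [Ordinal.add_one_eq_succ]
        exact hlim.succ_lt hβ
      have hmem := hγmin (β + 1) hsucc
      rw [derivChain_succ g hgmono] at hmem
      exact hzβ hmem
  choose Mm hMm1 hMm2 hMm3 using fun m : ℕ => KEY (1/((m:ℝ)+1)) (by positivity)
  have hEc : Eᶜ = ⋃ m, Mm m := by
    apply subset_antisymm
    · intro z hz
      have hne : ((r z : X)) ≠ z := fun hEq => hz (hEq ▸ (r z).2)
      have hpos : 0 < dist z ((r z : X)) := dist_pos.2 (Ne.symm hne)
      obtain ⟨m, hm⟩ := exists_nat_one_div_lt hpos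
      exact mem_iUnion.2 ⟨m, hMm3 m (le_of_lt hm)⟩
    · intro z hz hzE
      obtain ⟨m, hm⟩ := mem_iUnion.1 hz
      have hmem : z ∈ Mm m ∩ E := ⟨hm, hzE⟩
      rw [hMm2 m] at hmem
      exact hmem
  obtain ⟨F, hFcl, hFeq⟩ := isFsigma_iUnion_nat hMm1
  have hEeq : E = ⋂ n, (F n)ᶜ := by
    rw [← compl_iUnion, ← hFeq, ← hEc, compl_compl]
  rw [hEeq]
  exact .iInter fun n => (hFcl n).isOpen_compl.isGδ


end Key

end H1R

/-- In a completely metrizable space, a nonempty set is an H₁-retract iff it is Gδ. -/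
theorem isH1Retract_iff_isGδ {X : Type*} [TopologicalSpace X]
    (hX : CompletelyMetrizable X) (E : Set X) (hne : E.Nonempty) :
    IsH1Retract E ↔ IsGδ E := by
  obtain ⟨m, hm, hc⟩ := hX
  subst hm
  letI : MetricSpace X := m
  haveI : CompleteSpace X := hc
  exact ⟨fun h => H1R.dir2 h, fun h => H1R.dir1 hne h⟩
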